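/- Let a_1, …, a_M be positive integers. Consider the two-agent fair division instance with items x_1, x_2, g_1, …, g_M and additive valuations: v_1(x_1) = 1, v_2(x_1) = −1; v_1(x_2) = −1, v_2(x_2) = 1; and v_1(g_j) = v_2(g_j) = 2·a_j for each j ∈ {1, …, M}. Then there exists a subset S ⊆ {1, …, M} with ∑_{j∈S} a_j = ∑_{j∉S} a_j if and only if this instance admits an EQx allocation. -/

import Mathlib

/-- An allocation: pairwise disjoint bundles covering all the items. -/
def IsAllocation {ι : Type*} {n : ℕ} (A : Fin n → Finset ι) : Prop :=
  (∀ i j : Fin n, i ≠ j → Disjoint (A i) (A j)) ∧ ∀ x : ι, ∃ i : Fin n, x ∈ A i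

/-- EQx for additive (possibly mixed) valuations given by per-item values. -/
def IsEQxMixed {ι : Type*} {n : ℕ} (v : Fin n → ι → ℤ) (A : Fin n → Finset ι) : Prop :=
  ∀ i j : Fin n,
    (∀ x ∈ A j, 0 ≤ v j x → (∑ y ∈ A j, v j y) - v j x ≤ ∑ y ∈ A i, v i y) ∧
    (∀ x ∈ A i, v i x < 0 → (∑ y ∈ A i, v i y) - v i x ≥ ∑ y ∈ A j, v j y)

/-- The valuations of the reduction from Partition: item `Sum.inl 0` is `x₁` (worth `1` to
agent 0 and `-1` to agent 1), item `Sum.inl 1` is `x₂` (worth `-1` to agent 0 and `1` to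
agent 1), and item `Sum.inr j` is the good `g_j`, worth `2 * a j` to both agents. -/
def partitionVal {M : ℕ} (a : Fin M → ℤ) : Fin 2 → (Fin 2 ⊕ Fin M) → ℤ :=
  fun i => Sum.elim (fun k : Fin 2 => if i = k then (1 : ℤ) else -1) (fun j => 2 * a j)

lemma sum_decomp {M : ℕ} (a : Fin M → ℤ) (i : Fin 2) (B : Finset (Fin 2 ⊕ Fin M)) :
    ∑ y ∈ B, partitionVal a i y =
      (if Sum.inl 0 ∈ B then (if i = 0 then (1:ℤ) else -1) else 0) +
      (if Sum.inl 1 ∈ B then (if i = 1 then (1:ℤ) else -1) else 0) +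
      2 * ∑ j ∈ B.toRight, a j := by
  conv_lhs => rw [← Finset.toLeft_disjSum_toRight (u := B)]
  rw [Finset.sum_disjSum]
  congr 1
  · have : ∑ x ∈ B.toLeft, partitionVal a i (Sum.inl x)
        = ∑ x ∈ Finset.univ ∩ B.toLeft, partitionVal a i (Sum.inl x) := by
      rw [Finset.univ_inter]
    rw [this, ← Finset.sum_ite_mem, Fin.sum_univ_two]
    simp [partitionVal, Finset.mem_toLeft]
  · rw [Finset.mul_sum]
    simp [partitionVal]

/-- The Partition instance `a` has a solution iff the constructed two-agent fair division
instance admits an EQx allocation. -/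
theorem partition_iff_eqx (M : ℕ) (a : Fin M → ℤ) (ha : ∀ j, 0 < a j) :
    (∃ S : Finset (Fin M), ∑ j ∈ S, a j = ∑ j ∈ Sᶜ, a j) ↔
    ∃ A : Fin 2 → Finset (Fin 2 ⊕ Fin M),
      IsAllocation A ∧ IsEQxMixed (partitionVal a) A := by
  constructor
  · rintro ⟨S, hS⟩
    refine ⟨fun i => ({i} : Finset (Fin 2)).disjSum (if i = 0 then S else Sᶜ), ⟨?_, ?_⟩, ?_⟩
    · intro i j hij
      rw [Finset.disjoint_left]
      rintro (k | m) hx hy <;> fin_cases i <;> fin_cases j <;> simp_all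
    · rintro (k | m)
      · exact ⟨k, by simp⟩
      · by_cases hm : m ∈ S
        · exact ⟨0, by simp [hm]⟩
        · exact ⟨1, by simp [hm]⟩
    · have hsum : ∀ i : Fin 2,
          ∑ y ∈ ({i} : Finset (Fin 2)).disjSum (if i = 0 then S else Sᶜ),
            partitionVal a i y = 1 + 2 * ∑ j ∈ S, a j := by
        intro i
        rw [sum_decomp]
        fin_cases i <;> simp [hS]
      intro i j
      constructor
      · intro x hx hvx
        rw [hsum i, hsum j]
        linarith
      · intro x hx hvx
        rw [hsum i, hsum j]
        linarith
  · rintro ⟨A, ⟨hdisj, hcov⟩, heqx⟩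
    have hmem : ∀ x, x ∈ A 1 ↔ x ∉ A 0 := by
      intro x
      constructor
      · intro h1 h0
        exact (Finset.disjoint_left.1 (hdisj 0 1 (by decide))) h0 h1
      · intro h0
        obtain ⟨i, hi⟩ := hcov x
        fin_cases i
        · exact absurd hi h0
        · exact hi
    refine ⟨(A 0).toRight, ?_⟩
    have key : ∑ j ∈ ((A 0).toRight)ᶜ, a j = ∑ j ∈ (A 1).toRight, a j := by
      apply Finset.sum_congr _ (fun _ _ => rfl)
      ext j
      simp [hmem]
    have hA : (∑ y ∈ A 0, partitionVal a 0 y) ≤ (∑ y ∈ A 1, partitionVal a 1 y) + 1 := by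
      by_cases h : Sum.inl 0 ∈ A 0
      · have := (heqx 1 0).1 (Sum.inl 0) h (by norm_num [partitionVal])
        have hv : partitionVal a 0 (Sum.inl 0) = 1 := by norm_num [partitionVal]
        omega
      · have h1 : Sum.inl 0 ∈ A 1 := (hmem _).2 h
        have := (heqx 1 0).2 (Sum.inl 0) h1 (by norm_num [partitionVal])
        have hv : partitionVal a 1 (Sum.inl 0) = -1 := by norm_num [partitionVal]
        omega
    have hB : (∑ y ∈ A 1, partitionVal a 1 y) ≤ (∑ y ∈ A 0, partitionVal a 0 y) + 1 := by
      by_cases h : Sum.inl 1 ∈ A 0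
      · have := (heqx 0 1).2 (Sum.inl 1) h (by norm_num [partitionVal])
        have hv : partitionVal a 0 (Sum.inl 1) = -1 := by norm_num [partitionVal]
        omega
      · have h1 : Sum.inl 1 ∈ A 1 := (hmem _).2 h
        have := (heqx 0 1).1 (Sum.inl 1) h1 (by norm_num [partitionVal])
        have hv : partitionVal a 1 (Sum.inl 1) = 1 := by norm_num [partitionVal]
        omega
    rw [sum_decomp, sum_decomp] at hA hB
    rw [key]
    by_cases h0 : Sum.inl 0 ∈ A 0 <;> by_cases h1 : Sum.inl 1 ∈ A 0 <;>
      simp [h0, h1, hmem] at hA hB <;> omega
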